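/- In the equivalent-copies construction, assume in addition that p ≤ q ≤ r, that deg > 6, and that π(Δ(p,q,r)) = Alt(Ω), the full alternating group on Ω. Then N ≠ 1, i.e. the kernel of the action of H on the block system ℬ is nontrivial. -/

import Mathlib

open Equiv

def triRels (p q r : ℕ) : Set (FreeGroup (Fin 2)) :=
  {FreeGroup.of 0 ^ p, FreeGroup.of 1 ^ q, (FreeGroup.of 0 * FreeGroup.of 1) ^ r}

/-- The triangle group `Δ(p,q,r) = ⟨x, y ∣ x^p = y^q = (xy)^r = 1⟩`. -/
abbrev Tri (p q r : ℕ) := PresentedGroup (triRels p q r)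

/-- The generator `x` of the triangle group. -/
def gx (p q r : ℕ) : Tri p q r := PresentedGroup.of 0

/-- The generator `y` of the triangle group. -/
def gy (p q r : ℕ) : Tri p q r := PresentedGroup.of 1

/-- A permutation of `Ω` acting simultaneously on every copy `{i} × Ω`;
this models `π_1(g)π_2(g)⋯π_p(g)` on the disjoint union `𝒰 = Ω_1 ∪ ⋯ ∪ Ω_p`. -/
def prodCongrHom (ι Ω : Type) : Equiv.Perm Ω →* Equiv.Perm (ι × Ω) where
  toFun σ := Equiv.prodCongr (Equiv.refl ι) σ
  map_one' := Equiv.ext fun z => by cases z; rfl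
  map_mul' σ τ := Equiv.ext fun z => by cases z; rfl

/-- The `p`-cycle `(f_1(ω), f_2(ω), …, f_p(ω))`, where `f_i(ω) = (i, ω)`. -/
def fiberCycle (p : ℕ) (Ω : Type) [DecidableEq Ω] (ω : Ω) : Equiv.Perm (Fin p × Ω) :=
  (List.ofFn fun i : Fin p => ((i, ω) : Fin p × Ω)).formPerm

/-- `φ_x = π_1(x)⋯π_p(x) ∘ (a_1,…,a_p)(b_p,…,b_1)` on `𝒰 = Fin p × Ω`. -/
def phiX (p q r : ℕ) (Ω : Type) [DecidableEq Ω]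
    (π : Tri p q r →* Equiv.Perm Ω) (a b : Ω) : Equiv.Perm (Fin p × Ω) :=
  prodCongrHom (Fin p) Ω (π (gx p q r)) * fiberCycle p Ω a *
    ((List.ofFn fun i : Fin p => ((i, b) : Fin p × Ω)).reverse).formPerm

/-- `φ_y = π_1(y)⋯π_p(y)` on `𝒰 = Fin p × Ω`. -/
def phiY (p q r : ℕ) (Ω : Type) (π : Tri p q r →* Equiv.Perm Ω) : Equiv.Perm (Fin p × Ω) :=
  prodCongrHom (Fin p) Ω (π (gy p q r))

/-- The block `B_ω = {f_1(ω), …, f_p(ω)}` where `f_i(ω) = (i, ω)`. -/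
def Bset (p : ℕ) {Ω : Type} (ω : Ω) : Set (Fin p × Ω) :=
  Set.range fun i : Fin p => ((i, ω) : Fin p × Ω)

open Equiv.Perm Subgroup

theorem Equiv.Perm.inv_apply_self {α : Type*} (f : Perm α) (x : α) : f⁻¹ (f x) = x :=
  f.symm_apply_apply x

theorem Equiv.Perm.apply_inv_self {α : Type*} (f : Perm α) (x : α) : f (f⁻¹ x) = x :=
  f.apply_symm_apply x

section AuxSimplicity

variable {α : Type} [Fintype α] [DecidableEq α]

/-- Inclusion of the alternating group of a subtype into the ambient alternating group. -/
def altJ (P : α → Prop) [DecidablePred P] :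
    alternatingGroup {x : α // P x} →* alternatingGroup α :=
  MonoidHom.mk'
    (fun τ => ⟨Equiv.Perm.ofSubtype (τ : Perm {x : α // P x}), by
      rw [mem_alternatingGroup, Equiv.Perm.sign_ofSubtype]
      exact mem_alternatingGroup.mp τ.2⟩)
    (by
      intro τ₁ τ₂
      ext1
      exact map_mul Equiv.Perm.ofSubtype _ _)

lemma fpf_commutator (h6 : 6 ≤ Fintype.card α)
    (σ : Perm α) (hfpf : ∀ x, σ x ≠ x) :
    ∃ ρ : Perm α, ρ ∈ alternatingGroup α ∧ (ρ * σ * ρ⁻¹ * σ⁻¹ ≠ 1) ∧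
      ∃ t, (ρ * σ * ρ⁻¹ * σ⁻¹) t = t := by
  have hne : Nonempty α := Fintype.card_pos_iff.mp (by omega)
  obtain ⟨x⟩ := hne
  set y := σ x with hy
  have hxy : y ≠ x := hfpf x
  -- pick u outside {x, y, σ⁻¹ x, σ⁻¹ y}
  obtain ⟨u, hu⟩ : ∃ u, u ∉ ({x, y, σ⁻¹ x, σ⁻¹ y} : Finset α) := by
    by_contra hcon
    push_neg at hcon
    have : (Finset.univ : Finset α) ⊆ {x, y, σ⁻¹ x, σ⁻¹ y} :=
      fun z _ => hcon z
    have := Finset.card_le_card this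
    simp only [Finset.card_univ] at this
    have h4 : ({x, y, σ⁻¹ x, σ⁻¹ y} : Finset α).card ≤ 4 := by
      apply le_trans (Finset.card_insert_le _ _)
      apply Nat.succ_le_succ
      apply le_trans (Finset.card_insert_le _ _)
      apply Nat.succ_le_succ
      apply le_trans (Finset.card_insert_le _ _)
      simp
    omega
  simp only [Finset.mem_insert, Finset.mem_singleton, not_or] at hu
  obtain ⟨hux, huy, hu1, hu2⟩ := hu
  have hsux : σ u ≠ x := fun h => hu1 (by rw [← h, Equiv.Perm.inv_apply_self])
  have hsuy : σ u ≠ y := fun h => hu2 (by rw [← h, Equiv.Perm.inv_apply_self])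
  set v := σ u with hv
  have huv : v ≠ u := hfpf u
  have hvy : v ≠ y := hsuy
  set ρ := Equiv.swap y u * Equiv.swap u v with hρ
  have hρy : ρ y = u := by
    simp only [hρ, Equiv.Perm.mul_apply]
    rw [Equiv.swap_apply_of_ne_of_ne (Ne.symm huy) hvy.symm, Equiv.swap_apply_left]
  have hρfix : ∀ z, z ≠ y → z ≠ u → z ≠ v → ρ z = z := by
    intro z hzy hzu hzv
    simp only [hρ, Equiv.Perm.mul_apply]
    rw [Equiv.swap_apply_of_ne_of_ne hzu hzv, Equiv.swap_apply_of_ne_of_ne hzy hzu]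
  have hρfix' : ∀ z, z ≠ y → z ≠ u → z ≠ v → ρ⁻¹ z = z := by
    intro z h1 h2 h3
    have := hρfix z h1 h2 h3
    conv_lhs => rw [← this]
    exact Equiv.Perm.inv_apply_self ρ z
  have hxv : x ≠ v := Ne.symm hsux
  refine ⟨ρ, ?_, ?_, ?_⟩
  · rw [mem_alternatingGroup, hρ, map_mul, Equiv.Perm.sign_swap (Ne.symm huy),
      Equiv.Perm.sign_swap (Ne.symm huv)]
    norm_num
  · intro h
    have h' : ρ * σ * ρ⁻¹ = σ := by
      have := congrArg (· * σ) h
      simpa [mul_assoc] using this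
    have := congrArg (fun τ : Perm α => τ x) h'
    simp only [Equiv.Perm.mul_apply] at this
    rw [hρfix' x (Ne.symm hxy) (Ne.symm hux) hxv] at this
    rw [← hy, hρy] at this
    exact huy this
  · -- fixed point: any t outside {y, u, v, σ y, σ v}
    obtain ⟨t, ht⟩ : ∃ t, t ∉ ({y, u, v, σ y, σ v} : Finset α) := by
      by_contra hcon
      push_neg at hcon
      have : (Finset.univ : Finset α) ⊆ {y, u, v, σ y, σ v} := fun z _ => hcon z
      have := Finset.card_le_card this
      simp only [Finset.card_univ] at this
      have h5 : ({y, u, v, σ y, σ v} : Finset α).card ≤ 5 := by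
        apply le_trans (Finset.card_insert_le _ _)
        apply Nat.succ_le_succ
        apply le_trans (Finset.card_insert_le _ _)
        apply Nat.succ_le_succ
        apply le_trans (Finset.card_insert_le _ _)
        apply Nat.succ_le_succ
        apply le_trans (Finset.card_insert_le _ _)
        simp
      omega
    simp only [Finset.mem_insert, Finset.mem_singleton, not_or] at ht
    obtain ⟨hty, htu, htv, htsy, htsv⟩ := ht
    refine ⟨t, ?_⟩
    have hs1 : σ⁻¹ t ≠ y := fun h => htsy (by rw [← h, Equiv.Perm.apply_inv_self])
    have hs2 : σ⁻¹ t ≠ u := fun h => htv (by rw [hv, ← h, Equiv.Perm.apply_inv_self])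
    have hs3 : σ⁻¹ t ≠ v := fun h => htsv (by rw [← h, Equiv.Perm.apply_inv_self])
    simp only [Equiv.Perm.mul_apply]
    rw [hρfix' _ hs1 hs2 hs3, Equiv.Perm.apply_inv_self, hρfix t hty htu htv]

lemma exists_not_mem_finset {α : Type} [Fintype α] [DecidableEq α] (s : Finset α)
    (h : s.card < Fintype.card α) : ∃ t, t ∉ s := by
  by_contra hcon
  push_neg at hcon
  have hsub : (Finset.univ : Finset α) ⊆ s := fun z _ => hcon z
  have := Finset.card_le_card hsub
  simp only [Finset.card_univ] at this
  omega

lemma card_subtype_ne {α : Type} [Fintype α] [DecidableEq α] (w : α) :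
    Fintype.card {x : α // x ≠ w} = Fintype.card α - 1 := by
  have := Fintype.card_subtype_compl (fun x : α => x = w)
  simp only [Fintype.card_subtype_eq] at this
  convert this using 2

theorem altSimpleAux : ∀ m : ℕ, 5 ≤ m → ∀ (α : Type) [Fintype α] [DecidableEq α],
    Fintype.card α = m → ∀ N : Subgroup (alternatingGroup α), N.Normal → N ≠ ⊥ → N = ⊤ := by
  intro m
  induction m using Nat.strong_induction_on with
  | _ m IH =>
  intro h5 α _ _ hcard N hNorm hbot
  by_cases hm : m = 5
  · -- base case : card α = 5, transport from Fin 5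
    subst hm
    have e : α ≃ Fin 5 := Fintype.equivFinOfCardEq hcard
    let F : alternatingGroup α →* alternatingGroup (Fin 5) :=
      MonoidHom.mk'
        (fun σ => ⟨e.permCongr σ.val, by
          rw [mem_alternatingGroup, Equiv.Perm.sign_permCongr]
          exact mem_alternatingGroup.mp σ.2⟩)
        (by
          intro σ τ
          ext1
          show e.permCongr (σ.val * τ.val) = e.permCongr σ.val * e.permCongr τ.val
          ext x
          simp [Equiv.Perm.mul_apply])
    have Finj : Function.Injective F := by
      intro σ τ h
      have : e.permCongr σ.val = e.permCongr τ.val := congrArg Subtype.val h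
      exact Subtype.ext (e.permCongr.injective this)
    have Fsurj : Function.Surjective F := by
      intro τ
      refine ⟨⟨e.permCongr.symm τ.val, ?_⟩, ?_⟩
      · rw [Equiv.permCongr_symm, mem_alternatingGroup, Equiv.Perm.sign_permCongr]
        exact mem_alternatingGroup.mp τ.2
      · ext1
        show e.permCongr (e.permCongr.symm τ.val) = τ.val
        exact e.permCongr.apply_symm_apply τ.val
    have h1 : (N.map F).Normal := hNorm.map F Fsurj
    have h2 : N.map F ≠ ⊥ := fun h =>
      hbot ((Subgroup.map_eq_bot_iff_of_injective N Finj).mp h)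
    rcases IsSimpleGroup.eq_bot_or_eq_top_of_normal (N.map F) h1 with h | h
    · exact absurd h h2
    · have : N.map F = (⊤ : Subgroup (alternatingGroup α)).map F := by
        rw [h, Subgroup.map_top_of_surjective F Fsurj]
      exact Subgroup.map_injective Finj this
  · -- inductive step : m ≥ 6
    have h6 : 6 ≤ m := by omega
    -- get a nontrivial element of N
    obtain ⟨σ, hσN, hσ1⟩ : ∃ x, x ∈ N ∧ x ≠ 1 := by
      by_contra hcon
      push_neg at hcon
      exact hbot (Subgroup.eq_bot_iff_forall N |>.mpr fun x hx => hcon x hx)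
    -- produce a nontrivial element of N with a fixed point
    obtain ⟨θ, hθN, hθ1, w, hw⟩ :
        ∃ θ, θ ∈ N ∧ θ ≠ 1 ∧ ∃ w, (θ : Perm α) w = w := by
      by_cases hfp : ∃ x, (σ : Perm α) x = x
      · exact ⟨σ, hσN, hσ1, hfp⟩
      · push_neg at hfp
        obtain ⟨ρ, hρalt, hρne, t, ht⟩ :=
          fpf_commutator (by omega : 6 ≤ Fintype.card α) (σ : Perm α) hfp
        set ρA : alternatingGroup α := ⟨ρ, hρalt⟩ with hρA
        refine ⟨ρA * σ * ρA⁻¹ * σ⁻¹, ?_, ?_, t, ?_⟩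
        · exact mul_mem (hNorm.conj_mem σ hσN ρA) (inv_mem hσN)
        · intro h
          apply hρne
          have := congrArg (Subtype.val) h
          simpa using this
        · simpa using ht
    -- pass to the stabilizer of w, which is an alternating group on m - 1 points
    have hθval : (θ : Perm α) w = w := hw
    have hiff : ∀ x : α, (θ : Perm α) x ≠ w ↔ x ≠ w := by
      intro x
      rw [iff_comm]
      constructor
      · intro hx h
        exact hx ((θ : Perm α).injective (h.trans hθval.symm))
      · intro hx h
        exact hx (by rw [h, hθval])
    have hfixw : ∀ x : α, (θ : Perm α) x ≠ x → x ≠ w := by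
      intro x hx h
      subst h
      exact hx hθval
    set J := altJ (fun x : α => x ≠ w) with hJ
    set N' := N.comap J with hN'
    have hN'norm : N'.Normal := hNorm.comap J
    have hcard' : Fintype.card {x : α // x ≠ w} = m - 1 := by
      rw [card_subtype_ne, hcard]
    have hθ'mem : Equiv.Perm.subtypePerm (θ : Perm α) hiff ∈
        alternatingGroup {x : α // x ≠ w} := by
      rw [mem_alternatingGroup, Equiv.Perm.sign_subtypePerm _ _ hfixw]
      exact mem_alternatingGroup.mp θ.2
    set θ' : alternatingGroup {x : α // x ≠ w} :=
      ⟨Equiv.Perm.subtypePerm (θ : Perm α) hiff, hθ'mem⟩ with hθ'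
    have hJθ' : J θ' = θ := by
      ext1
      show Equiv.Perm.ofSubtype (Equiv.Perm.subtypePerm (θ : Perm α) hiff) = (θ : Perm α)
      exact Equiv.Perm.ofSubtype_subtypePerm hiff hfixw
    have hθ'N' : θ' ∈ N' := by
      rw [hN', Subgroup.mem_comap, hJθ']
      exact hθN
    have hθ'1 : θ' ≠ 1 := by
      intro h
      apply hθ1
      rw [← hJθ', h, map_one]
    have hN'bot : N' ≠ ⊥ := by
      intro h
      rw [h, Subgroup.mem_bot] at hθ'N'
      exact hθ'1 hθ'N'
    have hN'top : N' = ⊤ :=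
      IH (m - 1) (by omega) (by omega) {x : α // x ≠ w} hcard' N' hN'norm hN'bot
    -- extract a 3-cycle in N
    obtain ⟨x1, hx1⟩ := exists_not_mem_finset ({w} : Finset α)
      (by rw [hcard]; simp; omega)
    obtain ⟨x2, hx2⟩ := exists_not_mem_finset ({w, x1} : Finset α)
      (by rw [hcard]; refine lt_of_le_of_lt (Finset.card_insert_le _ _) ?_; simp; omega)
    obtain ⟨x3, hx3⟩ := exists_not_mem_finset ({w, x1, x2} : Finset α)
      (by rw [hcard]
          refine lt_of_le_of_lt (Finset.card_insert_le _ _) ?_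
          refine lt_of_le_of_lt (Nat.succ_le_succ (Finset.card_insert_le _ _)) ?_
          simp; omega)
    simp only [Finset.mem_insert, Finset.mem_singleton, not_or] at hx1 hx2 hx3
    have h1w : x1 ≠ w := hx1
    have h2w : x2 ≠ w := hx2.1
    have h21 : x2 ≠ x1 := hx2.2
    have h3w : x3 ≠ w := hx3.1
    have h31 : x3 ≠ x1 := hx3.2.1
    have h32 : x3 ≠ x2 := hx3.2.2
    set c : Perm α := Equiv.swap x1 x2 * Equiv.swap x1 x3 with hc
    have hc3 : Equiv.Perm.IsThreeCycle c :=
      Equiv.Perm.isThreeCycle_swap_mul_swap_same (Ne.symm h21) (Ne.symm h31) (Ne.symm h32)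
    have hcalt : c ∈ alternatingGroup α := hc3.mem_alternatingGroup
    have hcw : c w = w := by
      rw [hc, Equiv.Perm.mul_apply,
        Equiv.swap_apply_of_ne_of_ne (Ne.symm h1w) (Ne.symm h3w),
        Equiv.swap_apply_of_ne_of_ne (Ne.symm h1w) (Ne.symm h2w)]
    have hciff : ∀ x : α, c x ≠ w ↔ x ≠ w := by
      intro x
      rw [iff_comm]
      constructor
      · intro hx h
        exact hx (c.injective (h.trans hcw.symm))
      · intro hx h
        exact hx (by rw [h, hcw])
    have hcfix : ∀ x : α, c x ≠ x → x ≠ w := by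
      intro x hx h
      subst h
      exact hx hcw
    have hc'mem : Equiv.Perm.subtypePerm c hciff ∈ alternatingGroup {x : α // x ≠ w} := by
      rw [mem_alternatingGroup, Equiv.Perm.sign_subtypePerm _ _ hcfix]
      exact mem_alternatingGroup.mp hcalt
    have hcN : (⟨c, hcalt⟩ : alternatingGroup α) ∈ N := by
      have : (⟨Equiv.Perm.subtypePerm c hciff, hc'mem⟩ :
          alternatingGroup {x : α // x ≠ w}) ∈ N' := by
        rw [hN'top]; exact Subgroup.mem_top _
      rw [hN', Subgroup.mem_comap] at this
      convert this using 1
      ext1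
      exact (Equiv.Perm.ofSubtype_subtypePerm hciff hcfix).symm
    haveI := hNorm
    have hclos := hc3.alternating_normalClosure (by rw [Nat.card_eq_fintype_card, hcard]; omega)
    rw [eq_top_iff, ← hclos]
    apply Subgroup.normalClosure_le_normal
    rw [Set.singleton_subset_iff]
    exact hcN

end AuxSimplicity

lemma gx_pow_eq_one (p q r : ℕ) : (gx p q r) ^ p = 1 := by
  have hmem : (FreeGroup.of 0 : FreeGroup (Fin 2)) ^ p ∈ triRels p q r := by
    left; rfl
  show (PresentedGroup.of (rels := triRels p q r) 0) ^ p = 1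
  rw [PresentedGroup.of, ← map_pow]
  exact (QuotientGroup.eq_one_iff _).mpr (Subgroup.subset_normalClosure hmem)

lemma tri_generated (p q r : ℕ) (S : Subgroup (Tri p q r))
    (hx : gx p q r ∈ S) (hy : gy p q r ∈ S) : ∀ g, g ∈ S := by
  intro g
  have htop : Subgroup.closure (Set.range (PresentedGroup.of :
      Fin 2 → Tri p q r)) = ⊤ := PresentedGroup.closure_range_of _
  have hle : Subgroup.closure (Set.range (PresentedGroup.of :
      Fin 2 → Tri p q r)) ≤ S := by
    apply Subgroup.closure_le S |>.mpr
    rintro _ ⟨i, rfl⟩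
    fin_cases i
    · exact hx
    · exact hy
  rw [htop] at hle
  exact hle (Subgroup.mem_top g)

lemma formPerm_snd {p : ℕ} {Ω : Type} [DecidableEq Ω] (c : Ω) (l : List (Fin p × Ω))
    (hl : ∀ w ∈ l, w.2 = c) (z : Fin p × Ω) : (l.formPerm z).2 = z.2 := by
  by_cases hz : z ∈ l
  · rw [hl _ (List.formPerm_apply_mem_of_mem hz), hl _ hz]
  · rw [List.formPerm_apply_of_notMem hz]

lemma second_coord (p q r : ℕ) (Ω : Type) [Fintype Ω] [DecidableEq Ω]
    (π : Tri p q r →* Equiv.Perm Ω) (φ : Tri p q r →* Equiv.Perm (Fin p × Ω))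
    (a b : Ω)
    (hφx : φ (gx p q r) = phiX p q r Ω π a b)
    (hφy : φ (gy p q r) = phiY p q r Ω π) :
    ∀ (g : Tri p q r) (z : Fin p × Ω), (φ g z).2 = π g z.2 := by
  set S : Subgroup (Tri p q r) :=
    { carrier := {g | ∀ z : Fin p × Ω, (φ g z).2 = π g z.2}
      one_mem' := by intro z; simp
      mul_mem' := by
        intro g h hg hh z
        rw [map_mul, map_mul, Equiv.Perm.mul_apply, Equiv.Perm.mul_apply, hg, hh]
      inv_mem' := by
        intro g hg z
        have h1 : (φ g (φ g⁻¹ z)).2 = π g (φ g⁻¹ z).2 := hg _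
        rw [map_inv, Equiv.Perm.apply_inv_self] at h1
        rw [map_inv, map_inv]
        have := congrArg (⇑(π g)⁻¹) h1
        rw [Equiv.Perm.inv_apply_self] at this
        exact this.symm } with hS
  have hprod : ∀ (σ : Equiv.Perm Ω) (z : Fin p × Ω),
      ((prodCongrHom (Fin p) Ω σ) z).2 = σ z.2 := by
    intro σ ⟨i, ω⟩; rfl
  have hgxS : gx p q r ∈ S := by
    intro z
    rw [hφx, phiX, Equiv.Perm.mul_apply, Equiv.Perm.mul_apply, hprod, fiberCycle,
      formPerm_snd a _ ?_, formPerm_snd b _ ?_]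
    · intro w hw
      rw [List.mem_reverse, List.mem_ofFn] at hw
      obtain ⟨i, rfl⟩ := hw; rfl
    · intro w hw
      rw [List.mem_ofFn] at hw
      obtain ⟨i, rfl⟩ := hw; rfl
  have hgyS : gy p q r ∈ S := by
    intro z
    rw [hφy, phiY, hprod]
  exact fun g => tri_generated p q r S hgxS hgyS g

lemma psi_bounds (p q r : ℕ) (hp : p.Prime) (Ω : Type) [Fintype Ω] [DecidableEq Ω]
    (π : Tri p q r →* Equiv.Perm Ω) (φ : Tri p q r →* Equiv.Perm (Fin p × Ω))
    (hE : ∀ (g : Tri p q r) (z : Fin p × Ω), (φ g z).2 = π g z.2)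
    (hcongr : ∀ g g' : Tri p q r, π g = π g' → φ g = φ g')
    (hrange : π.range = alternatingGroup Ω)
    (a : Ω) (hax : π (gx p q r) a = a)
    (hnt : φ (gx p q r) (⟨0, hp.pos⟩, a) ≠ (⟨0, hp.pos⟩, a))
    (P : Ω → Prop) [DecidablePred P] (hPa : ¬ P a)
    (hgxP : ∀ x, π (gx p q r) x ≠ x → P x) :
    p ∣ Nat.card (alternatingGroup {x : Ω // P x}) ∧
    (5 ≤ Fintype.card {x : Ω // P x} →
      Nat.card (alternatingGroup {x : Ω // P x}) ≤ Nat.factorial p) := by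
  classical
  have hsec : ∀ σ : Equiv.Perm Ω, σ ∈ alternatingGroup Ω → ∃ g, π g = σ := by
    intro σ hσ
    rw [← hrange] at hσ
    exact MonoidHom.mem_range.mp hσ
  -- for τ in the alternating group of the subtype, a preimage in the triangle group
  set σv : alternatingGroup {x : Ω // P x} → Equiv.Perm Ω :=
    fun τ => Equiv.Perm.ofSubtype (τ : Equiv.Perm {x : Ω // P x}) with hσv
  have hσalt : ∀ τ, σv τ ∈ alternatingGroup Ω := by
    intro τ
    rw [hσv, mem_alternatingGroup, Equiv.Perm.sign_ofSubtype]
    exact mem_alternatingGroup.mp τ.2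
  set gsel : alternatingGroup {x : Ω // P x} → Tri p q r :=
    fun τ => Classical.choose (hsec (σv τ) (hσalt τ)) with hgsel
  have hg : ∀ τ, π (gsel τ) = σv τ := fun τ => Classical.choose_spec (hsec (σv τ) (hσalt τ))
  have hga : ∀ τ, π (gsel τ) a = a := by
    intro τ
    rw [hg]
    exact Equiv.Perm.ofSubtype_apply_of_not_mem _ hPa
  -- pointwise form of elements fixing a
  have hpt : ∀ (g : Tri p q r), π g a = a → ∀ i : Fin p,
      φ g (i, a) = ((φ g (i, a)).1, a) := by
    intro g hgfix i
    have h2 : (φ g (i, a)).2 = a := by rw [hE g (i, a)]; exact hgfix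
    exact Prod.ext rfl h2
  have hgainv : ∀ τ, π (gsel τ)⁻¹ a = a := by
    intro τ
    rw [map_inv]
    have := congrArg (⇑(π (gsel τ))⁻¹) (hga τ)
    rw [Equiv.Perm.inv_apply_self] at this
    exact this.symm
  -- the permutation of the fiber over a induced by τ
  set Fn : alternatingGroup {x : Ω // P x} → Equiv.Perm (Fin p) := fun τ =>
    { toFun := fun i => (φ (gsel τ) (i, a)).1
      invFun := fun i => (φ (gsel τ)⁻¹ (i, a)).1
      left_inv := by
        intro i
        show (φ (gsel τ)⁻¹ ((φ (gsel τ) (i, a)).1, a)).1 = i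
        have h1 := hpt (gsel τ) (hga τ) i
        rw [← h1, map_inv, Equiv.Perm.inv_apply_self]
      right_inv := by
        intro i
        show (φ (gsel τ) ((φ (gsel τ)⁻¹ (i, a)).1, a)).1 = i
        have h1 := hpt (gsel τ)⁻¹ (hgainv τ) i
        rw [← h1, map_inv, Equiv.Perm.apply_inv_self] } with hFn
  have hFnapp : ∀ τ i, Fn τ i = (φ (gsel τ) (i, a)).1 := fun τ i => rfl
  set Ψ : alternatingGroup {x : Ω // P x} →* Equiv.Perm (Fin p) :=
    MonoidHom.mk' Fn (by
      intro τ₁ τ₂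
      have hππ : π (gsel (τ₁ * τ₂)) = π (gsel τ₁ * gsel τ₂) := by
        rw [map_mul, hg, hg, hg]
        show Equiv.Perm.ofSubtype ((τ₁ : Equiv.Perm {x : Ω // P x}) *
          (τ₂ : Equiv.Perm {x : Ω // P x})) = _
        rw [map_mul]
      have hφφ := hcongr _ _ hππ
      refine Equiv.ext fun i => ?_
      show (φ (gsel (τ₁ * τ₂)) (i, a)).1 = Fn τ₁ (Fn τ₂ i)
      rw [hφφ, map_mul, Equiv.Perm.mul_apply, hpt (gsel τ₂) (hga τ₂) i]
      rfl) with hΨ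
  -- the distinguished element τ₀ coming from x
  have hiff : ∀ x : Ω, P (π (gx p q r) x) ↔ P x := by
    intro x
    rw [iff_comm]
    by_cases hfix : π (gx p q r) x = x
    · rw [hfix]
    · constructor
      · intro _
        exact hgxP _ (fun hh => hfix ((π (gx p q r)).injective hh))
      · intro _
        exact hgxP _ hfix
  have hτ₀sign : Equiv.Perm.subtypePerm (π (gx p q r)) hiff ∈
      alternatingGroup {x : Ω // P x} := by
    rw [mem_alternatingGroup, Equiv.Perm.sign_subtypePerm _ _ hgxP]
    have : π (gx p q r) ∈ alternatingGroup Ω := by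
      rw [← hrange]; exact ⟨gx p q r, rfl⟩
    exact mem_alternatingGroup.mp this
  set τ₀ : alternatingGroup {x : Ω // P x} :=
    ⟨Equiv.Perm.subtypePerm (π (gx p q r)) hiff, hτ₀sign⟩ with hτ₀
  have hστ₀ : σv τ₀ = π (gx p q r) := Equiv.Perm.ofSubtype_subtypePerm hiff hgxP
  have hφτ₀ : φ (gsel τ₀) = φ (gx p q r) := hcongr _ _ (by rw [hg]; exact hστ₀)
  have hΨτ₀ne : Ψ τ₀ ≠ 1 := by
    intro h
    apply hnt
    have happ : Fn τ₀ ⟨0, hp.pos⟩ = ⟨0, hp.pos⟩ := by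
      rw [show Fn τ₀ = Ψ τ₀ from rfl, h]; rfl
    rw [hFnapp, hφτ₀] at happ
    have := hpt (gx p q r) hax ⟨0, hp.pos⟩
    rw [this, happ]
  have hpow : (π (gx p q r)) ^ p = 1 := by
    rw [← map_pow, gx_pow_eq_one, map_one]
  have hτ₀p : τ₀ ^ p = 1 := by
    ext1
    rw [SubgroupClass.coe_pow]
    show (Equiv.Perm.subtypePerm (π (gx p q r)) hiff) ^ p = 1
    rw [Equiv.Perm.subtypePerm_pow]
    ext x
    simp [hpow]
  have hΨp : Ψ τ₀ ^ p = 1 := by rw [← map_pow, hτ₀p, map_one]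
  have hΨord : orderOf (Ψ τ₀) = p := by
    rcases hp.eq_one_or_self_of_dvd _ (orderOf_dvd_of_pow_eq_one hΨp) with h | h
    · exact absurd (orderOf_eq_one_iff.mp h) hΨτ₀ne
    · exact h
  have hτ₀ord : orderOf τ₀ = p := by
    apply Nat.dvd_antisymm (orderOf_dvd_of_pow_eq_one hτ₀p)
    rw [← hΨord]
    exact orderOf_map_dvd Ψ τ₀
  constructor
  · rw [Nat.card_eq_fintype_card, ← hτ₀ord]
    exact orderOf_dvd_card
  · intro h5
    have hker : Ψ.ker = ⊥ := by
      by_contra hbot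
      have htop := altSimpleAux (Fintype.card {x : Ω // P x}) h5 {x : Ω // P x} rfl
        Ψ.ker (MonoidHom.normal_ker Ψ) hbot
      apply hΨτ₀ne
      have : τ₀ ∈ Ψ.ker := by rw [htop]; exact Subgroup.mem_top _
      exact MonoidHom.mem_ker.mp this
    have hinj : Function.Injective Ψ := (MonoidHom.ker_eq_bot_iff Ψ).mp hker
    have := Nat.card_le_card_of_injective (⇑Ψ) hinj
    rwa [Nat.card_eq_fintype_card (α := Equiv.Perm (Fin p)), Fintype.card_perm,
      Fintype.card_fin] at this


lemma card_subtype_not_mem {Ω : Type} [Fintype Ω] [DecidableEq Ω] (s : Finset Ω) :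
    Fintype.card {x : Ω // x ∉ s} = Fintype.card Ω - s.card := by
  have := Fintype.card_subtype_compl (fun x : Ω => x ∈ s)
  rw [this]
  congr 1
  exact Fintype.card_coe s

theorem kernel_nontrivial_alternating
    (p q r k : ℕ) (hp : p.Prime) (hq : 0 < q) (hr : 0 < r) (hk : 0 < k)
    (Ω : Type) [Fintype Ω] [DecidableEq Ω]
    (π : Tri p q r →* Equiv.Perm Ω)
    (htrans : ∀ z z' : Ω, ∃ g : Tri p q r, π g z = z')
    (a b : Ω) (hab : a ≠ b)
    (hax : π (gx p q r) a = a) (hbx : π (gx p q r) b = b)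
    (hhandle : ((π (gx p q r * gy p q r)) ^ k) a = b)
    (hks : k < Nat.card {w : Ω | ∃ n : ℤ, ((π (gx p q r * gy p q r)) ^ n) a = w})
    (φ : Tri p q r →* Equiv.Perm (Fin p × Ω))
    (hφx : φ (gx p q r) = phiX p q r Ω π a b)
    (hφy : φ (gy p q r) = phiY p q r Ω π)
    (hpq : p ≤ q) (hqr : q ≤ r)
    (hdeg : 6 < Fintype.card Ω)
    (hrange : π.range = alternatingGroup Ω) :
    ∃ h : Equiv.Perm (Fin p × Ω), h ≠ 1 ∧ (∃ g : Tri p q r, φ g = h) ∧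
      ∀ ω : Ω, ⇑h '' Bset p ω = Bset p ω := by
  classical
  by_contra hcon
  push_neg at hcon
  have hE := second_coord p q r Ω π φ a b hφx hφy
  -- if φ g preserves every block then φ g = 1
  have hker : ∀ g : Tri p q r, π g = 1 → φ g = 1 := by
    intro g hg
    by_contra hne
    obtain ⟨ω, hω⟩ := hcon (φ g) hne ⟨g, rfl⟩
    apply hω
    have hsnd : ∀ i : Fin p, φ g (i, ω) = ((φ g (i, ω)).1, ω) := by
      intro i
      refine Prod.ext rfl ?_
      rw [hE g (i, ω), hg]
      rfl
    set F : Fin p → Fin p := fun i => (φ g (i, ω)).1 with hF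
    have hFinj : Function.Injective F := by
      intro i j hij
      have h1 : φ g (i, ω) = φ g (j, ω) := by
        rw [hsnd i, hsnd j]
        exact congrArg (fun t => (t, ω)) hij
      have := (φ g).injective h1
      exact congrArg Prod.fst this
    have hFsurj : Function.Surjective F := Finite.surjective_of_injective hFinj
    ext z
    constructor
    · rintro ⟨w, hw, rfl⟩
      obtain ⟨i, rfl⟩ := hw
      rw [hsnd i]
      exact ⟨F i, rfl⟩
    · rintro ⟨j, rfl⟩
      obtain ⟨i, hi⟩ := hFsurj j
      exact ⟨(i, ω), ⟨i, rfl⟩, by rw [hsnd i]; exact congrArg (fun t => (t, ω)) hi⟩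
  have hcongr : ∀ g g' : Tri p q r, π g = π g' → φ g = φ g' := by
    intro g g' h
    have h1 : π (g⁻¹ * g') = 1 := by
      rw [map_mul, map_inv, h, inv_mul_cancel]
    have h2 := hker _ h1
    rw [map_mul, map_inv] at h2
    exact inv_mul_eq_one.mp h2
  -- φ(gx) moves the point (0, a) within its fiber
  have hp1 : (1 : ℕ) < p := hp.one_lt
  have hnt : φ (gx p q r) (⟨0, hp.pos⟩, a) ≠ (⟨0, hp.pos⟩, a) := by
    have hstep1 : (((List.ofFn fun i : Fin p => ((i, b) : Fin p × Ω)).reverse).formPerm)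
        (⟨0, hp.pos⟩, a) = (⟨0, hp.pos⟩, a) := by
      apply List.formPerm_apply_of_notMem
      rw [List.mem_reverse, List.mem_ofFn]
      rintro ⟨i, hi⟩
      exact hab (congrArg Prod.snd hi).symm
    have hnd : (List.ofFn fun i : Fin p => ((i, a) : Fin p × Ω)).Nodup :=
      List.nodup_ofFn.mpr (fun i j hij => congrArg Prod.fst hij)
    have hlen : (List.ofFn fun i : Fin p => ((i, a) : Fin p × Ω)).length = p :=
      List.length_ofFn
    have hlen1 : 1 < (List.ofFn fun i : Fin p => ((i, a) : Fin p × Ω)).length := by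
      rw [hlen]; exact hp1
    have hstep2 : fiberCycle p Ω a (⟨0, hp.pos⟩, a) = (⟨1, hp1⟩, a) := by
      have h0 : (List.ofFn fun i : Fin p => ((i, a) : Fin p × Ω))[0]'(by omega) =
          (⟨0, hp.pos⟩, a) := by
        rw [List.getElem_ofFn]
      have h1 : (List.ofFn fun i : Fin p => ((i, a) : Fin p × Ω))[1]'hlen1 =
          (⟨1, hp1⟩, a) := by
        rw [List.getElem_ofFn]
      rw [fiberCycle, ← h0, List.formPerm_apply_getElem_zero _ hnd hlen1, h1]
    intro heq
    rw [hφx] at heq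
    have hcomp : phiX p q r Ω π a b (⟨0, hp.pos⟩, a) = (⟨1, hp1⟩, a) := by
      rw [phiX, Equiv.Perm.mul_apply, Equiv.Perm.mul_apply, hstep1, hstep2]
      show (Equiv.prodCongr (Equiv.refl (Fin p)) (π (gx p q r))) (⟨1, hp1⟩, a) = _
      rw [Equiv.prodCongr_apply]
      simp [hax]
    rw [hcomp] at heq
    have := congrArg Prod.fst heq
    simp only at this
    exact absurd (congrArg Fin.val this) (by norm_num)
  -- apply the counting lemma with P x := x ∉ {a, b} to get p ≤ n - 2
  set n := Fintype.card Ω with hn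
  have hP2card : Fintype.card {x : Ω // x ∉ ({a, b} : Finset Ω)} = n - 2 := by
    rw [card_subtype_not_mem, Finset.card_pair hab]
  obtain ⟨hdvd, -⟩ := psi_bounds p q r hp Ω π φ hE hcongr hrange a hax hnt
    (fun x : Ω => x ∉ ({a, b} : Finset Ω)) (by simp)
    (by
      intro x hx hmem
      simp only [Finset.mem_insert, Finset.mem_singleton] at hmem
      rcases hmem with rfl | rfl
      · exact hx hax
      · exact hx hbx)
  have hnt2 : Nontrivial {x : Ω // x ∉ ({a, b} : Finset Ω)} := by
    rw [← Fintype.one_lt_card_iff_nontrivial, hP2card]; omega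
  have h2card : 2 * Fintype.card (alternatingGroup {x : Ω // x ∉ ({a, b} : Finset Ω)}) =
      (n - 2).factorial := by
    rw [two_mul_card_alternatingGroup, Fintype.card_perm, hP2card]
  have hpn2 : p ≤ n - 2 := by
    have h1 : p ∣ (n - 2).factorial := by
      rw [← h2card]
      exact dvd_mul_of_dvd_right (by rwa [Nat.card_eq_fintype_card] at hdvd) 2
    exact (Nat.Prime.dvd_factorial hp).mp h1
  -- apply the counting lemma with P x := x ≠ a to get (n-1)! ≤ 2 * p!
  have hP1card : Fintype.card {x : Ω // x ∉ ({a} : Finset Ω)} = n - 1 := by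
    rw [card_subtype_not_mem, Finset.card_singleton]
  obtain ⟨-, hle⟩ := psi_bounds p q r hp Ω π φ hE hcongr hrange a hax hnt
    (fun x : Ω => x ∉ ({a} : Finset Ω)) (by simp)
    (by
      intro x hx hmem
      simp only [Finset.mem_singleton] at hmem
      subst hmem
      exact hx hax)
  have hnt1 : Nontrivial {x : Ω // x ∉ ({a} : Finset Ω)} := by
    rw [← Fintype.one_lt_card_iff_nontrivial, hP1card]; omega
  have h1card : 2 * Fintype.card (alternatingGroup {x : Ω // x ∉ ({a} : Finset Ω)}) =
      (n - 1).factorial := by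
    rw [two_mul_card_alternatingGroup, Fintype.card_perm, hP1card]
  have hle1 : Nat.card (alternatingGroup {x : Ω // x ∉ ({a} : Finset Ω)}) ≤ p.factorial :=
    hle (by rw [hP1card]; omega)
  rw [Nat.card_eq_fintype_card] at hle1
  -- final arithmetic contradiction
  have hfle : (n - 1).factorial ≤ 2 * (n - 2).factorial := by
    calc (n - 1).factorial = 2 * Fintype.card (alternatingGroup
        {x : Ω // x ∉ ({a} : Finset Ω)}) := h1card.symm
    _ ≤ 2 * p.factorial := by omega
    _ ≤ 2 * (n - 2).factorial := by
        have := Nat.factorial_le hpn2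
        omega
  have hsucc : (n - 1).factorial = (n - 1) * (n - 2).factorial := by
    have : n - 1 = (n - 2) + 1 := by omega
    rw [this, Nat.factorial_succ]
  rw [hsucc] at hfle
  have hpos : 0 < (n - 2).factorial := Nat.factorial_pos _
  have : n - 1 ≤ 2 := by
    by_contra hgt
    push_neg at hgt
    have : 3 * (n - 2).factorial ≤ (n - 1) * (n - 2).factorial :=
      Nat.mul_le_mul_right _ (by omega)
    omega
  omega
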